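/- In the NUCA H_θ on Σ = {0,1,2,3} with θ(x)=id for x≤0 and θ(x)=f for x>0 (f as below): if c is a configuration with positions 0 ≤ x₁ < x₂ such that c(x₁) ≠ 1, c(x₂) = 2, and c(x) = 1 for all x₁ < x < x₂, then H_θ^{x₂−x₁}(c)(x₂) = 0. -/

import Mathlib

open Function

/-- `f` is a local rule of radius (at most) `r`: it only depends on coordinates in `[-r, r]`. -/
def IsLocalRule {A : Type*} (r : ℕ) (f : (ℤ → A) → A) : Prop :=
  ∀ u v : ℤ → A, (∀ i : ℤ, -(r : ℤ) ≤ i → i ≤ (r : ℤ) → u i = v i) → f u = f v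

/-- The global map of the non-uniform cellular automaton with rule distribution `θ`. -/
def nuca {A : Type*} (θ : ℤ → ((ℤ → A) → A)) (c : ℤ → A) : ℤ → A :=
  fun x => θ x (fun i => c (x + i))

/-- A configuration `θ : ℤ → R` is (spatially) recurrent: every finite pattern
occurs in some other (translated) position. -/
def Recurrent {R : Type*} (θ : ℤ → R) : Prop :=
  ∀ (a : ℤ) (m : ℕ), ∃ k : ℤ, k ≠ 0 ∧ ∀ i : ℕ, i < m → θ (a + k + i) = θ (a + i)

/-- A configuration `θ : ℤ → R` is (spatially) uniformly recurrent: every finite pattern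
occurs with bounded gaps. -/
def UnifRecurrent {R : Type*} (θ : ℤ → R) : Prop :=
  ∀ (a : ℤ) (m : ℕ), ∃ n : ℕ, ∀ x : ℤ, ∃ k : ℤ, x ≤ k ∧ k ≤ x + (n : ℤ) ∧
    ∀ i : ℕ, i < m → θ (k + i) = θ (a + i)

/-- `φ` lies in the orbit closure of `θ` under the shift (combinatorial characterization:
every finite pattern of `φ` occurs in `θ`). -/
def InOrbitClosure {R : Type*} (φ θ : ℤ → R) : Prop :=
  ∀ (a : ℤ) (m : ℕ), ∃ k : ℤ, ∀ i : ℕ, i < m → φ (a + i) = θ (a + k + i)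

/-- The radius-`r` neighbourhood of a finite domain `D`. -/
noncomputable def nbhd (r : ℕ) (D : Finset ℤ) : Finset ℤ :=
  D.biUnion (fun x => Finset.Icc (x - (r : ℤ)) (x + (r : ℤ)))

/-- A NUCA (with radius-`r` rules) is balanced: every pattern on a finite domain `D` has
exactly `|Σ|^(|N(D)|-|D|)` preimage patterns on the neighbourhood `N(D)`. -/
def NucaBalanced {A : Type*} [Fintype A] (r : ℕ) (θ : ℤ → ((ℤ → A) → A)) : Prop :=
  ∀ (D : Finset ℤ) (p : ℤ → A),
    Nat.card {q : { y : ℤ // y ∈ nbhd r D } → A //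
      ∀ c : ℤ → A, (∀ i : { y : ℤ // y ∈ nbhd r D }, c i.1 = q i) →
        ∀ x ∈ D, nuca θ c x = p x} =
      Fintype.card A ^ ((nbhd r D).card - D.card)

/-- `c` is an equicontinuity point of the NUCA `θ`. -/
def EqPt {A : Type*} (θ : ℤ → ((ℤ → A) → A)) (c : ℤ → A) : Prop :=
  ∀ E : Finset ℤ, ∃ D : Finset ℤ, ∀ e : ℤ → A, (∀ x ∈ D, e x = c x) →
    ∀ n : ℕ, 1 ≤ n → ∀ x ∈ E, (nuca θ)^[n] e x = (nuca θ)^[n] c x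

/-- The NUCA `θ` is sensitive to initial conditions. -/
def Sensitive {A : Type*} (θ : ℤ → ((ℤ → A) → A)) : Prop :=
  ∃ E : Finset ℤ, ∀ c : ℤ → A, ∀ D : Finset ℤ, ∃ e : ℤ → A,
    (∀ x ∈ D, e x = c x) ∧ ∃ n : ℕ, 1 ≤ n ∧ ∃ x ∈ E, (nuca θ)^[n] e x ≠ (nuca θ)^[n] c x


/-- The radius-1 rule f on the alphabet {0,1,2,3}. -/
def f18 : (ℤ → Fin 4) → Fin 4 := fun u =>
  if u 0 = 0 ∧ u 1 = 3 then 3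
  else if u (-1) = 1 ∧ u 0 = 1 ∧ u 1 = 1 then 1
  else if u (-1) = 1 ∧ u 0 = 1 ∧ u 1 = 2 then 1
  else if u 0 = 1 ∧ u 1 = 3 then 3
  else if u (-1) = 1 ∧ u 0 = 2 then 2
  else if u 0 = 3 ∧ u 1 = 3 then 3
  else 0

/-- The identity rule on {0,1,2,3}. -/
def idRule4 : (ℤ → Fin 4) → Fin 4 := fun u => u 0

/-- f on the positive cells, identity on the nonpositive cells. -/
def θ18 : ℤ → ((ℤ → Fin 4) → Fin 4) := fun x => if 0 < x then f18 else idRule4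

lemma f18_A (u : ℤ → Fin 4) (hm : u (-1) ≠ 1) (h0 : u 0 = 2) : f18 u = 0 := by
  simp [f18, h0, hm]

lemma f18_B (u : ℤ → Fin 4) (hm : u (-1) ≠ 1) (h0 : u 0 = 1)
    (h1 : u 1 = 1 ∨ u 1 = 2) : f18 u = 0 := by
  rcases h1 with h1 | h1 <;> simp [f18, h0, h1, hm]

lemma f18_C (u : ℤ → Fin 4) (hm : u (-1) = 1) (h0 : u 0 = 1)
    (h1 : u 1 = 1 ∨ u 1 = 2) : f18 u = 1 := by
  rcases h1 with h1 | h1 <;> simp [f18, h0, h1, hm]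

lemma f18_D (u : ℤ → Fin 4) (hm : u (-1) = 1) (h0 : u 0 = 2) : f18 u = 2 := by
  simp [f18, h0, hm]

lemma nuca_pos (c : ℤ → Fin 4) (x : ℤ) (hx : 0 < x) :
    nuca θ18 c x = f18 (fun i => c (x + i)) := by
  simp [nuca, θ18, hx]

lemma key_18 (n : ℕ) : ∀ (c : ℤ → Fin 4) (x₁ : ℤ), 0 ≤ x₁ → c x₁ ≠ 1 →
    c (x₁ + (n + 1 : ℕ)) = 2 →
    (∀ x : ℤ, x₁ < x → x < x₁ + (n + 1 : ℕ) → c x = 1) →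
    (nuca θ18)^[n + 1] c (x₁ + (n + 1 : ℕ)) = 0 := by
  induction n with
  | zero =>
    intro c x₁ h0 h1 h2 _
    have hx : (0 : ℤ) < x₁ + (0 + 1 : ℕ) := by push_cast; omega
    rw [Function.iterate_one, nuca_pos c _ hx]
    apply f18_A
    · show c (x₁ + (0 + 1 : ℕ) + (-1)) ≠ 1
      have : x₁ + (0 + 1 : ℕ) + (-1) = x₁ := by push_cast; omega
      rw [this]; exact h1
    · show c (x₁ + (0 + 1 : ℕ) + 0) = 2
      have : x₁ + (0 + 1 : ℕ) + 0 = x₁ + (0 + 1 : ℕ) := by omega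
      rw [this]; exact h2
  | succ n ih =>
    intro c x₁ h0 h1 h2 hmid
    set c' := nuca θ18 c with hc'
    have hstep : ∀ x : ℤ, 0 < x → c' x = f18 (fun i => c (x + i)) := fun x hx =>
      nuca_pos c x hx
    -- new hole at x₁ + 1
    have hh1 : c' (x₁ + 1) ≠ 1 := by
      rw [hstep _ (by omega)]
      have hz : f18 (fun i => c (x₁ + 1 + i)) = 0 := by
        apply f18_B
        · show c (x₁ + 1 + (-1)) ≠ 1
          have : x₁ + 1 + (-1) = x₁ := by omega
          rw [this]; exact h1
        · show c (x₁ + 1 + 0) = 1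
          exact hmid _ (by omega) (by push_cast; omega)
        · show c (x₁ + 1 + 1) = 1 ∨ c (x₁ + 1 + 1) = 2
          rcases eq_or_lt_of_le (show x₁ + 1 + 1 ≤ x₁ + (n + 1 + 1 : ℕ) by push_cast; omega)
            with h | h
          · right; rw [h]; exact h2
          · left; exact hmid _ (by omega) h
      rw [hz]; decide
    have hh2 : c' (x₁ + 1 + (n + 1 : ℕ)) = 2 := by
      rw [hstep _ (by push_cast; omega)]
      apply f18_D
      · show c (x₁ + 1 + (n + 1 : ℕ) + (-1)) = 1
        exact hmid _ (by push_cast; omega) (by push_cast; omega)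
      · show c (x₁ + 1 + (n + 1 : ℕ) + 0) = 2
        have : x₁ + 1 + (n + 1 : ℕ) + 0 = x₁ + (n + 1 + 1 : ℕ) := by push_cast; omega
        rw [this]; exact h2
    have hhmid : ∀ x : ℤ, x₁ + 1 < x → x < x₁ + 1 + (n + 1 : ℕ) → c' x = 1 := by
      intro x hxl hxr
      rw [hstep _ (by omega)]
      apply f18_C
      · show c (x + (-1)) = 1
        exact hmid _ (by omega) (by push_cast at hxr ⊢; omega)
      · show c (x + 0) = 1
        exact hmid _ (by omega) (by push_cast at hxr ⊢; omega)
      · show c (x + 1) = 1 ∨ c (x + 1) = 2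
        rcases eq_or_lt_of_le (show x + 1 ≤ x₁ + (n + 1 + 1 : ℕ) by push_cast at hxr ⊢; omega)
          with h | h
        · right; rw [h]; exact h2
        · left; exact hmid _ (by omega) h
    have := ih c' (x₁ + 1) (by omega) hh1 hh2 hhmid
    rw [Function.iterate_succ_apply]
    have heq : x₁ + 1 + (n + 1 : ℕ) = x₁ + (n + 1 + 1 : ℕ) := by push_cast; omega
    rw [heq] at this
    exact this

/-- If `0 ≤ x₁ < x₂`, `c x₁ ≠ 1`, `c x₂ = 2` and `c` is 1 strictly between `x₁` and
`x₂`, then after `x₂ - x₁` steps the cell `x₂` holds 0. -/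
theorem stmt_18 (c : ℤ → Fin 4) (x₁ x₂ : ℤ) (h0 : 0 ≤ x₁) (h12 : x₁ < x₂)
    (h1 : c x₁ ≠ 1) (h2 : c x₂ = 2) (hmid : ∀ x : ℤ, x₁ < x → x < x₂ → c x = 1) :
    (nuca θ18)^[(x₂ - x₁).toNat] c x₂ = 0 := by
  obtain ⟨n, hn⟩ : ∃ n : ℕ, (x₂ - x₁).toNat = n + 1 := by
    refine ⟨(x₂ - x₁).toNat - 1, ?_⟩
    omega
  have hx₂ : x₂ = x₁ + (n + 1 : ℕ) := by push_cast; omega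
  rw [hn, hx₂]
  apply key_18 n c x₁ h0 h1
  · rw [← hx₂]; exact h2
  · intro x hl hr; exact hmid x hl (by omega)
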